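/- Let M be a matroid, ψ: E(M) → Γ a labeling to an abelian group, and w: E(M) → ℝ a weight function. If M has at least one basis B' with ψ(B') ≠ 0, then for any basis B minimizing w among all bases, there exists a basis B* with ψ(B*) ≠ 0, minimizing w among all bases with non-zero label, such that |B \ B*| ≤ 1. -/

import Mathlib

open Set

/-- Sum over a one-element exchange. -/
private lemma sum_exch {α G : Type*} [AddCommGroup G] (f : α → G) {B : Set α}
    (hB : B.Finite) {x y : α} (hx : x ∈ B) (hy : y ∉ B) :
    ∑ᶠ e ∈ insert y (B \ {x}), f e = (∑ᶠ e ∈ B, f e) + f y - f x := by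
  have hyd : y ∉ B \ {x} := fun h => hy h.1
  have hxd : x ∉ B \ {x} := fun h => h.2 rfl
  have h1 : ∑ᶠ e ∈ insert y (B \ {x}), f e = f y + ∑ᶠ e ∈ B \ {x}, f e :=
    finsum_mem_insert f hyd (hB.diff)
  have h2 : ∑ᶠ e ∈ B, f e = f x + ∑ᶠ e ∈ B \ {x}, f e := by
    conv_lhs => rw [← insert_eq_of_mem hx, ← insert_diff_singleton]
    exact finsum_mem_insert f hxd (hB.diff)
  rw [h1, h2]; abel

/-- The symmetric exchange property for matroid bases. -/
private lemma symm_exchange {α : Type*} {M : Matroid α} [M.Finite] {B B' : Set α}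
    (hB : M.IsBase B) (hB' : M.IsBase B') {x : α} (hxB : x ∈ B) (hxB' : x ∉ B') :
    ∃ y, y ∈ B' ∧ y ∉ B ∧ M.IsBase (insert y (B \ {x})) ∧ M.IsBase (insert x (B' \ {y})) := by
  have hxE : x ∈ M.E := hB.subset_ground hxB
  -- choose an inclusion-minimal I ⊆ B' with x ∈ closure I
  have hfin : {I : Set α | I ⊆ B' ∧ x ∈ M.closure I}.Finite :=
    hB'.finite.finite_subsets.subset (fun I hI => hI.1)
  have hne : {I : Set α | I ⊆ B' ∧ x ∈ M.closure I}.Nonempty :=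
    ⟨B', Subset.rfl, by rw [hB'.closure_eq]; exact hxE⟩
  obtain ⟨I, ⟨hIB', hxI⟩, hImin⟩ :=
    Set.exists_min_image _ (fun I => I.ncard) hfin hne
  have hIfin : I.Finite := hB'.finite.subset hIB'
  have hminimal : ∀ J ⊆ B', J ⊆ I → J ≠ I → x ∉ M.closure J := by
    intro J hJB' hJI hJne hxJ
    have hlt : J.ncard < I.ncard := Set.ncard_lt_ncard (hJI.ssubset_of_ne hJne) hIfin
    exact absurd (hImin J ⟨hJB', hxJ⟩) (not_le.2 hlt)
  -- find y ∈ I not in closure (B \ {x})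
  have hxcl : x ∉ M.closure (B \ {x}) := hB.indep.notMem_closure_diff_of_mem hxB
  have hyex : ∃ y ∈ I, y ∉ M.closure (B \ {x}) := by
    by_contra h
    push_neg at h
    have hIsub : I ⊆ M.closure (B \ {x}) := h
    have : M.closure I ⊆ M.closure (B \ {x}) :=
      (M.closure_subset_closure hIsub).trans (M.closure_closure _).subset
    exact hxcl (this hxI)
  obtain ⟨y, hyI, hycl⟩ := hyex
  have hyB' : y ∈ B' := hIB' hyI
  have hyx : y ≠ x := fun h => hxB' (h ▸ hyB')
  have hyB : y ∉ B := fun hyB =>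
    hycl (M.subset_closure (B \ {x}) (diff_subset.trans hB.subset_ground) ⟨hyB, hyx⟩)
  refine ⟨y, hyB', hyB, ?_, ?_⟩
  · -- B - x + y is a base
    have hind : M.Indep (insert y (B \ {x})) := by
      rw [(hB.indep.subset diff_subset).insert_indep_iff]
      exact Or.inl ⟨hB'.subset_ground hyB', hycl⟩
    have := hB.exchange_isBase_of_indep' hxB hyB
      (by rwa [← insert_diff_singleton_comm hyx B])
    rwa [← insert_diff_singleton_comm hyx B] at this
  · -- B' + x - y is a base
    have hycl' : y ∉ M.closure (B' \ {y}) := hB'.indep.notMem_closure_diff_of_mem hyB'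
    have hxcl' : x ∉ M.closure (B' \ {y}) := by
      intro hcon
      have hxIy : x ∉ M.closure (I \ {y}) :=
        hminimal _ (diff_subset.trans hIB') diff_subset
          (by intro h; rw [← h] at hyI; exact hyI.2 rfl)
      have hxins : x ∈ M.closure (insert y (I \ {y})) \ M.closure (I \ {y}) := by
        rw [insert_diff_singleton, insert_eq_of_mem hyI]
        exact ⟨hxI, hxIy⟩
      have hyex2 := Matroid.closure_exchange hxins
      have h1 : insert x (I \ {y}) ⊆ M.closure (B' \ {y}) :=
        insert_subset hcon (fun e he =>
          M.subset_closure (B' \ {y}) (diff_subset.trans hB'.subset_ground) ⟨hIB' he.1, he.2⟩)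
      have h2 : M.closure (insert x (I \ {y})) ⊆ M.closure (B' \ {y}) :=
        (M.closure_subset_closure h1).trans (M.closure_closure _).subset
      exact hycl' (h2 hyex2.1)
    have hind : M.Indep (insert x (B' \ {y})) := by
      rw [(hB'.indep.subset diff_subset).insert_indep_iff]
      exact Or.inl ⟨hxE, hxcl'⟩
    have := hB'.exchange_isBase_of_indep' hyB' hxB'
      (by rwa [← insert_diff_singleton_comm (Ne.symm hyx) B'])
    rwa [← insert_diff_singleton_comm (Ne.symm hyx) B'] at this

/-- If a matroid `M` has a basis with non-zero label, then for any
minimum-weight basis `B` there is a minimum-weight non-zero basis `B*` with `|B \ B*| ≤ 1`. -/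
theorem stmt_1 {α Γ : Type*} [AddCommGroup Γ] (M : Matroid α) [M.Finite]
    (ψ : α → Γ) (w : α → ℝ)
    (hex : ∃ B', M.IsBase B' ∧ (∑ᶠ e ∈ B', ψ e) ≠ 0)
    (B : Set α) (hB : M.IsBase B)
    (hmin : ∀ B', M.IsBase B' → (∑ᶠ e ∈ B, w e) ≤ ∑ᶠ e ∈ B', w e) :
    ∃ Bstar : Set α, M.IsBase Bstar ∧ (∑ᶠ e ∈ Bstar, ψ e) ≠ 0 ∧
      (∀ B', M.IsBase B' → (∑ᶠ e ∈ B', ψ e) ≠ 0 →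
        (∑ᶠ e ∈ Bstar, w e) ≤ ∑ᶠ e ∈ B', w e) ∧
      (B \ Bstar).ncard ≤ 1 := by
  by_cases hψB : (∑ᶠ e ∈ B, ψ e) ≠ 0
  · exact ⟨B, hB, hψB, fun B' hB' _ => hmin B' hB', by simp⟩
  push_neg at hψB
  -- the family of nonzero bases is finite and nonempty
  set 𝓑 : Set (Set α) := {B' | M.IsBase B' ∧ (∑ᶠ e ∈ B', ψ e) ≠ 0} with h𝓑
  have h𝓑fin : 𝓑.Finite :=
    M.ground_finite.finite_subsets.subset (fun B' hB' => hB'.1.subset_ground)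
  have h𝓑ne : 𝓑.Nonempty := hex
  obtain ⟨B₀, hB₀, hB₀min⟩ := Set.exists_min_image 𝓑 (fun B' => ∑ᶠ e ∈ B', w e) h𝓑fin h𝓑ne
  -- the family of minimum-weight nonzero bases
  set S : Set (Set α) := {B' ∈ 𝓑 | ∀ B'' ∈ 𝓑, (∑ᶠ e ∈ B', w e) ≤ ∑ᶠ e ∈ B'', w e} with hS
  have hSfin : S.Finite := h𝓑fin.subset (fun B' hB' => hB'.1)
  have hSne : S.Nonempty := ⟨B₀, hB₀, hB₀min⟩
  obtain ⟨Bs, ⟨hBs𝓑, hBsmin⟩, hBscard⟩ :=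
    Set.exists_min_image S (fun B' => (B \ B').ncard) hSfin hSne
  obtain ⟨hBsBase, hBsψ⟩ := hBs𝓑
  refine ⟨Bs, hBsBase, hBsψ, fun B' hB' hψ' => hBsmin B' ⟨hB', hψ'⟩, ?_⟩
  by_contra hcard
  push_neg at hcard
  have hcard2 : 2 ≤ (B \ Bs).ncard := hcard
  have hBfin : B.Finite := hB.finite
  have hBsfin : Bs.Finite := hBsBase.finite
  have hdne : (B \ Bs).Nonempty := by
    rw [← Set.ncard_pos (hBfin.diff)]; omega
  obtain ⟨x, hxB, hxBs⟩ := hdne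
  obtain ⟨y, hyBs, hyB, hB1, hB2⟩ := symm_exchange hB hBsBase hxB hxBs
  set B1 := insert y (B \ {x}) with hB1def
  set B2 := insert x (Bs \ {y}) with hB2def
  have hxyne : x ≠ y := fun h => hyB (h ▸ hxB)
  -- sum computations
  have hwB1 : (∑ᶠ e ∈ B1, w e) = (∑ᶠ e ∈ B, w e) + w y - w x := sum_exch w hBfin hxB hyB
  have hwB2 : (∑ᶠ e ∈ B2, w e) = (∑ᶠ e ∈ Bs, w e) + w x - w y := sum_exch w hBsfin hyBs hxBs
  have hψB1 : (∑ᶠ e ∈ B1, ψ e) = (∑ᶠ e ∈ B, ψ e) + ψ y - ψ x := sum_exch ψ hBfin hxB hyB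
  have hψB2 : (∑ᶠ e ∈ B2, ψ e) = (∑ᶠ e ∈ Bs, ψ e) + ψ x - ψ y := sum_exch ψ hBsfin hyBs hxBs
  have hwx_le : w x ≤ w y := by
    have := hmin B1 hB1; rw [hwB1] at this; linarith
  by_cases hψ2 : (∑ᶠ e ∈ B2, ψ e) = 0
  · -- then B1 is a nonzero basis of minimum weight with |B \ B1| = 1
    have hψ1 : (∑ᶠ e ∈ B1, ψ e) = ∑ᶠ e ∈ Bs, ψ e := by
      have h : (∑ᶠ e ∈ Bs, ψ e) + ψ x - ψ y = 0 := by rw [← hψB2]; exact hψ2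
      have h2 : (∑ᶠ e ∈ Bs, ψ e) = ψ y - ψ x :=
        eq_sub_of_add_eq (sub_eq_zero.mp h)
      rw [hψB1, hψB, h2]; abel
    have hψ1ne : (∑ᶠ e ∈ B1, ψ e) ≠ 0 := hψ1 ▸ hBsψ
    have hB1𝓑 : B1 ∈ 𝓑 := ⟨hB1, hψ1ne⟩
    have hge : (∑ᶠ e ∈ Bs, w e) ≤ ∑ᶠ e ∈ B1, w e := hBsmin B1 hB1𝓑
    have hle : (∑ᶠ e ∈ B1, w e) ≤ ∑ᶠ e ∈ Bs, w e := by
      have := hmin B2 hB2; rw [hwB2] at this; rw [hwB1]; linarith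
    have hB1S : B1 ∈ S := ⟨hB1𝓑, fun B'' hB'' => le_of_eq_of_le (le_antisymm hle hge) (hBsmin B'' hB'')⟩
    have hdiff1 : B \ B1 = {x} := by
      ext e
      simp only [hB1def, mem_diff, mem_insert_iff, mem_singleton_iff, not_or]
      constructor
      · rintro ⟨heB, hey, h⟩
        by_contra hex'
        exact h ⟨heB, hex'⟩
      · rintro rfl
        exact ⟨hxB, hxyne, fun h => h.2 rfl⟩
    have := hBscard B1 hB1S
    rw [hdiff1, Set.ncard_singleton] at this
    omega
  · -- then B2 is a nonzero basis of minimum weight with smaller |B \ ·|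
    have hB2𝓑 : B2 ∈ 𝓑 := ⟨hB2, hψ2⟩
    have hge : (∑ᶠ e ∈ Bs, w e) ≤ ∑ᶠ e ∈ B2, w e := hBsmin B2 hB2𝓑
    have hwxy : w x = w y := by rw [hwB2] at hge; linarith
    have hB2S : B2 ∈ S := by
      refine ⟨hB2𝓑, fun B'' hB'' => ?_⟩
      rw [hwB2, hwxy]
      simpa using hBsmin B'' hB''
    have hdiff2 : B \ B2 = (B \ Bs) \ {x} := by
      ext e
      simp only [hB2def, mem_diff, mem_insert_iff, mem_singleton_iff, not_or]
      constructor
      · rintro ⟨heB, hex', h⟩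
        refine ⟨⟨heB, fun heBs => h ⟨heBs, fun hey => hyB (hey ▸ heB)⟩⟩, hex'⟩
      · rintro ⟨⟨heB, heBs⟩, hex'⟩
        exact ⟨heB, hex', fun h => heBs h.1⟩
    have := hBscard B2 hB2S
    rw [hdiff2, Set.ncard_diff_singleton_of_mem (show x ∈ B \ Bs from ⟨hxB, hxBs⟩)] at this
    omega
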